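/- Semi-discrete gradient-flow energy dissipation, Fokker-Planck case: suppose u_1,...,u_I : J → ℝ solve, on the open interval J, the semi-discrete scheme u_i'(t) + (1/Δx)(F_{i+1/2}(t) − F_{i−1/2}(t)) = 0 for i = 1,...,I, where F_{1/2} = F_{I+1/2} = 0 and, for 1 ≤ i ≤ I−1, F_{i+1/2}(t) = −(φ_{i+1/2}(t)/Δx)[(g(u_{i+1}(t)) − v_{i+1}) − (g(u_i(t)) − v_i)] with nonnegative functions φ_{i+1/2} : J → ℝ and fixed reals v_1,...,v_I. Then for every t ∈ J, (d/dt)[ Δx Σ_{i=1}^I ( G(u_i(t)) − u_i(t) v_i ) ] = −Δx Σ_{i=1}^{I−1} φ_{i+1/2}(t) [ ((g(u_{i+1}(t)) − v_{i+1}) − (g(u_i(t)) − v_i))/Δx ]², which is ≤ 0. -/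

import Mathlib

private lemma abel_aux (w F : ℕ → ℝ) (m : ℕ) :
    ∑ i ∈ Finset.range (m + 1), w (i + 1) * (F (i + 1) - F i)
      = ∑ i ∈ Finset.range m, (w (i + 1) - w (i + 2)) * F (i + 1)
        + w (m + 1) * F (m + 1) - w 1 * F 0 := by
  induction m with
  | zero => simp; ring
  | succ m ih =>
      rw [Finset.sum_range_succ, ih, Finset.sum_range_succ]
      ring

private lemma icc_to_range (f : ℕ → ℝ) (n : ℕ) :
    ∑ i ∈ Finset.Icc 1 n, f i = ∑ i ∈ Finset.range n, f (i + 1) := by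
  rw [← Finset.Ico_add_one_right_eq_Icc, Finset.sum_Ico_eq_sum_range]
  simp [add_comm]

/-- semi-discrete gradient-flow energy dissipation, Fokker-Planck case. -/
theorem semidiscrete_gradient_flow_energy_dissipation_FP
    (I : ℕ) (hI : 1 ≤ I) (Δx : ℝ) (hΔx : Δx = 1 / (I : ℝ))
    (J : Set ℝ) (hJopen : IsOpen J) (hJconn : J.OrdConnected)
    (g G : ℝ → ℝ) (hG : ∀ x : ℝ, HasDerivAt G (g x) x)
    (u : ℕ → ℝ → ℝ) (φ : ℕ → ℝ → ℝ) (v : ℕ → ℝ)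
    (hφ : ∀ i, ∀ t ∈ J, 0 ≤ φ i t)
    (F : ℕ → ℝ → ℝ)
    (hF0 : ∀ t, F 0 t = 0) (hFI : ∀ t, F I t = 0)
    (hF : ∀ i ∈ Finset.Icc 1 (I - 1), ∀ t ∈ J,
      F i t = -(φ i t / Δx) * ((g (u (i + 1) t) - v (i + 1)) - (g (u i t) - v i)))
    (hode : ∀ i ∈ Finset.Icc 1 I, ∀ t ∈ J,
      HasDerivAt (u i) (-(1 / Δx) * (F i t - F (i - 1) t)) t) :
    ∀ t ∈ J,
      HasDerivAt
        (fun s => Δx * ∑ i ∈ Finset.Icc 1 I, (G (u i s) - u i s * v i))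
        (-Δx * ∑ i ∈ Finset.Icc 1 (I - 1),
          φ i t * (((g (u (i + 1) t) - v (i + 1)) - (g (u i t) - v i)) / Δx) ^ 2) t
      ∧ -Δx * ∑ i ∈ Finset.Icc 1 (I - 1),
          φ i t * (((g (u (i + 1) t) - v (i + 1)) - (g (u i t) - v i)) / Δx) ^ 2 ≤ 0 := by
  intro t ht
  obtain ⟨m, rfl⟩ : ∃ m, I = m + 1 := ⟨I - 1, (Nat.succ_pred_eq_of_pos hI).symm⟩
  have hm : (m : ℕ) + 1 - 1 = m := rfl
  have hΔx0 : (0 : ℝ) < Δx := by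
    rw [hΔx]; positivity
  have hΔxne : Δx ≠ 0 := ne_of_gt hΔx0
  set w : ℕ → ℝ := fun i => g (u i t) - v i with hw
  -- the derivative with the ODE plugged in
  have hderiv : HasDerivAt
      (fun s => Δx * ∑ i ∈ Finset.Icc 1 (m + 1), (G (u i s) - u i s * v i))
      (Δx * ∑ i ∈ Finset.Icc 1 (m + 1),
        w i * (-(1 / Δx) * (F i t - F (i - 1) t))) t := by
    apply HasDerivAt.const_mul
    apply HasDerivAt.fun_sum
    intro i hi
    have hu := hode i hi t ht
    have h1 : HasDerivAt (fun s => G (u i s))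
        (g (u i t) * (-(1 / Δx) * (F i t - F (i - 1) t))) t := (hG (u i t)).comp t hu
    have h2 := h1.sub (hu.mul_const (v i))
    convert h2 using 1
    · rfl
    simp only [hw]; ring
  -- rewrite the derivative value
  have key : Δx * ∑ i ∈ Finset.Icc 1 (m + 1), w i * (-(1 / Δx) * (F i t - F (i - 1) t))
      = -Δx * ∑ i ∈ Finset.Icc 1 (m + 1 - 1),
          φ i t * (((g (u (i + 1) t) - v (i + 1)) - (g (u i t) - v i)) / Δx) ^ 2 := by
    rw [hm]
    have e1 : ∑ i ∈ Finset.Icc 1 (m + 1), w i * (-(1 / Δx) * (F i t - F (i - 1) t))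
        = ∑ i ∈ Finset.range (m + 1), -(1 / Δx) * (w (i + 1) * (F (i + 1) t - F i t)) := by
      rw [icc_to_range]
      apply Finset.sum_congr rfl
      intro i _
      have h1 : i + 1 - 1 = i := by omega
      rw [h1]; ring
    have e2 : ∑ i ∈ Finset.range (m + 1), w (i + 1) * (F (i + 1) t - F i t)
        = ∑ i ∈ Finset.range m, (w (i + 1) - w (i + 2)) * F (i + 1) t := by
      rw [abel_aux w (fun i => F i t) m, hF0 t, hFI t]
      ring
    have e3 : ∑ i ∈ Finset.range m, (w (i + 1) - w (i + 2)) * F (i + 1) t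
        = ∑ i ∈ Finset.range m, (φ (i + 1) t / Δx) * (w (i + 2) - w (i + 1)) ^ 2 := by
      apply Finset.sum_congr rfl
      intro i hi
      have hmem : i + 1 ∈ Finset.Icc 1 (m + 1 - 1) := by
        rw [hm, Finset.mem_Icc]
        exact ⟨Nat.le_add_left 1 i, Nat.succ_le_of_lt (Finset.mem_range.mp hi)⟩
      rw [hF (i + 1) hmem t ht]
      simp only [hw]
      ring
    have e4 : ∑ i ∈ Finset.Icc 1 m,
          φ i t * (((g (u (i + 1) t) - v (i + 1)) - (g (u i t) - v i)) / Δx) ^ 2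
        = ∑ i ∈ Finset.range m,
          φ (i + 1) t * ((w (i + 2) - w (i + 1)) / Δx) ^ 2 := by
      rw [icc_to_range]
    have hab : ∑ i ∈ Finset.range m, (φ (i + 1) t / Δx) * (w (i + 2) - w (i + 1)) ^ 2
        = Δx * ∑ i ∈ Finset.range m, φ (i + 1) t * ((w (i + 2) - w (i + 1)) / Δx) ^ 2 := by
      rw [Finset.mul_sum]
      refine Finset.sum_congr rfl fun i _ => ?_
      field_simp
    rw [e1, ← Finset.mul_sum, e2, e3, e4, hab]
    field_simp
  constructor
  · rw [← key]; exact hderiv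
  · have hsum : 0 ≤ ∑ i ∈ Finset.Icc 1 (m + 1 - 1),
        φ i t * (((g (u (i + 1) t) - v (i + 1)) - (g (u i t) - v i)) / Δx) ^ 2 := by
      apply Finset.sum_nonneg
      intro i _
      exact mul_nonneg (hφ i t ht) (sq_nonneg _)
    have := mul_nonneg hΔx0.le hsum
    linarith
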